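/- Let 𝒩 ⊂ M_n(F_q) be the set of nilpotent matrices and let f be its characteristic function. Then the Fourier transform f̂(Y) = Σ_{X nilpotent} φ(tr(XY)) depends only on the conjugacy class of Y, and f̂(0) = |𝒩| = q^{n² − n}. -/

import Mathlib

open Matrix

noncomputable section


open scoped Classical

open Polynomial


variable {F : Type} [Field F] [Fintype F] [DecidableEq F]

lemma FH.pow_eq_zero {n : ℕ} (A : Matrix (Fin n) (Fin n) F) (h : IsNilpotent A) :
    A ^ n = 0 := by
  have h1 : A.charpoly - X ^ (Fintype.card (Fin n)) = 0 :=
    IsNilpotent.eq_zero (Matrix.isNilpotent_charpoly_sub_pow_of_isNilpotent h)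
  have h2 : A.charpoly = X ^ n := by
    rw [sub_eq_zero] at h1; simpa using h1
  calc A ^ n = aeval A (X ^ n : F[X]) := by simp
    _ = aeval A A.charpoly := by rw [h2]
    _ = 0 := Matrix.aeval_self_charpoly A

def FH.nilJ (k : ℕ) : Matrix (Fin k) (Fin k) F :=
  Matrix.of fun i j => if (i : ℕ) = (j : ℕ) + 1 then 1 else 0

lemma FH.nilJ_pow (k m : ℕ) :
    (FH.nilJ (F := F) k) ^ m = Matrix.of fun (i j : Fin k) => if (i : ℕ) = (j : ℕ) + m then 1 else 0 := by
  induction m with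
  | zero =>
      ext i j
      simp [Matrix.one_apply, Fin.ext_iff]
  | succ m ih =>
      ext i j
      rw [pow_succ, ih]
      simp only [Matrix.mul_apply, Matrix.of_apply, FH.nilJ, ite_mul, one_mul, zero_mul]
      by_cases h : (i : ℕ) = (j : ℕ) + (m + 1)
      · have hb : ((j : ℕ) + 1) < k := by have := i.isLt; omega
        rw [Finset.sum_eq_single (⟨(j : ℕ) + 1, hb⟩ : Fin k)]
        · simp [h]; omega
        · intro b _ hbne
          simp only [ite_eq_right_iff]
          intro h1 h2
          exact absurd (Fin.ext (by simpa using h2) : b = ⟨(j : ℕ) + 1, hb⟩) hbne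
        · simp
      · rw [Finset.sum_eq_zero, if_neg h]
        intro b _
        simp only [ite_eq_right_iff]
        intro h1 h2
        omega

lemma FH.nilJ_pow_self (k : ℕ) : (FH.nilJ (F := F) k) ^ k = 0 := by
  rw [FH.nilJ_pow]
  ext i j
  have := i.isLt
  simp only [Matrix.of_apply, Matrix.zero_apply, ite_eq_right_iff]
  intro h; omega

lemma FH.fromBlocks_pow {k m : ℕ} (A : Matrix (Fin k) (Fin k) F)
    (B : Matrix (Fin k) (Fin m) F) (C : Matrix (Fin m) (Fin m) F) (p : ℕ) :
    ∃ X, (Matrix.fromBlocks A B 0 C) ^ p = Matrix.fromBlocks (A ^ p) X 0 (C ^ p) := by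
  induction p with
  | zero => exact ⟨0, by simp [Matrix.fromBlocks_one]⟩
  | succ p ih =>
      obtain ⟨X, hX⟩ := ih
      refine ⟨A ^ p * B + X * C, ?_⟩
      rw [pow_succ, pow_succ, pow_succ, hX, Matrix.fromBlocks_multiply]
      simp

lemma FH.isNilpotent_fromBlocks_iff {k m : ℕ}
    (B : Matrix (Fin k) (Fin m) F) (C : Matrix (Fin m) (Fin m) F) :
    IsNilpotent (Matrix.fromBlocks (FH.nilJ k) B 0 C) ↔ IsNilpotent C := by
  constructor
  · rintro ⟨p, hp⟩
    obtain ⟨X, hX⟩ := FH.fromBlocks_pow (FH.nilJ (F := F) k) B C p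
    refine ⟨p, ?_⟩
    rw [hp] at hX
    have := congrArg Matrix.toBlocks₂₂ hX
    simpa [Matrix.toBlocks_fromBlocks₂₂, show (0 : Matrix (Fin k ⊕ Fin m) (Fin k ⊕ Fin m) F).toBlocks₂₂ = 0 from by ext; rfl] using this.symm
  · rintro ⟨p, hp⟩
    refine ⟨k + p, ?_⟩
    obtain ⟨X, hX⟩ := FH.fromBlocks_pow (FH.nilJ (F := F) k) B C k
    obtain ⟨Y, hY⟩ := FH.fromBlocks_pow (FH.nilJ (F := F) k) B C p
    rw [pow_add, hX, hY, Matrix.fromBlocks_multiply, FH.nilJ_pow_self, hp]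
    simp

lemma FH.conj_pow {n : ℕ} (g : (Matrix (Fin n) (Fin n) F)ˣ) (A : Matrix (Fin n) (Fin n) F)
    (m : ℕ) :
    ((g : Matrix (Fin n) (Fin n) F) * A * ((g⁻¹ : (Matrix (Fin n) (Fin n) F)ˣ) : Matrix (Fin n) (Fin n) F)) ^ m
      = (g : Matrix (Fin n) (Fin n) F) * A ^ m * ((g⁻¹ : (Matrix (Fin n) (Fin n) F)ˣ) : Matrix (Fin n) (Fin n) F) := by
  set G : Matrix (Fin n) (Fin n) F := (g : Matrix (Fin n) (Fin n) F) with hG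
  set Gi : Matrix (Fin n) (Fin n) F := ((g⁻¹ : (Matrix (Fin n) (Fin n) F)ˣ) : Matrix (Fin n) (Fin n) F) with hGi
  have hgi : G * Gi = 1 := by rw [hG, hGi, ← Units.val_mul, mul_inv_cancel, Units.val_one]
  have hig : Gi * G = 1 := by rw [hG, hGi, ← Units.val_mul, inv_mul_cancel, Units.val_one]
  induction m with
  | zero => rw [pow_zero, pow_zero, mul_one, hgi]
  | succ m ih =>
      rw [pow_succ, ih, pow_succ]
      calc G * A ^ m * Gi * (G * A * Gi) = G * A ^ m * (Gi * G) * A * Gi := by noncomm_ring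
        _ = G * (A ^ m * A) * Gi := by rw [hig]; noncomm_ring

lemma FH.isNilpotent_conj_iff {n : ℕ} (g : (Matrix (Fin n) (Fin n) F)ˣ)
    (A : Matrix (Fin n) (Fin n) F) :
    IsNilpotent ((g : Matrix (Fin n) (Fin n) F) * A *
      ((g⁻¹ : (Matrix (Fin n) (Fin n) F)ˣ) : Matrix (Fin n) (Fin n) F)) ↔ IsNilpotent A := by
  set G : Matrix (Fin n) (Fin n) F := (g : Matrix (Fin n) (Fin n) F) with hG
  set Gi : Matrix (Fin n) (Fin n) F := ((g⁻¹ : (Matrix (Fin n) (Fin n) F)ˣ) : Matrix (Fin n) (Fin n) F) with hGi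
  have hgi : G * Gi = 1 := by rw [hG, hGi, ← Units.val_mul, mul_inv_cancel, Units.val_one]
  have hig : Gi * G = 1 := by rw [hG, hGi, ← Units.val_mul, inv_mul_cancel, Units.val_one]
  constructor
  · rintro ⟨p, hp⟩
    rw [FH.conj_pow] at hp
    refine ⟨p, ?_⟩
    have h2 := congrArg (fun M => Gi * M * G) hp
    simp only [mul_zero, zero_mul] at h2
    calc A ^ p = (Gi * G) * A ^ p * (Gi * G) := by rw [hig]; noncomm_ring
      _ = Gi * (G * A ^ p * Gi) * G := by noncomm_ring
      _ = 0 := h2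
  · rintro ⟨p, hp⟩
    exact ⟨p, by rw [FH.conj_pow, hp, mul_zero, zero_mul]⟩

lemma FH.indep_iterates {n k : ℕ} (A : Matrix (Fin n) (Fin n) F) (v : Fin n → F)
    (hk : (A ^ k) *ᵥ v = 0) (hne : ∀ j < k, (A ^ j) *ᵥ v ≠ 0) :
    LinearIndependent F (fun i : Fin k => (A ^ (i : ℕ)) *ᵥ v) := by
  have hz : ∀ j, k ≤ j → (A ^ j) *ᵥ v = 0 := by
    intro j hj
    rw [show j = (j - k) + k by omega, pow_add, ← Matrix.mulVec_mulVec, hk,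
      Matrix.mulVec_zero]
  rw [Fintype.linearIndependent_iff]
  intro g hg
  have key : ∀ m : ℕ, ∀ hm : m < k, g ⟨m, hm⟩ = 0 := by
    intro m
    induction m using Nat.strong_induction_on with
    | _ m IH =>
      intro hm
      have h2 : ∑ i : Fin k, g i • ((A ^ (k - 1 - m + (i : ℕ))) *ᵥ v) = 0 := by
        have h3 := congrArg (fun w => (A ^ (k - 1 - m)) *ᵥ w) hg
        simp only [Matrix.mulVec_zero] at h3
        rw [← h3, show (A ^ (k - 1 - m)) *ᵥ (∑ i : Fin k, g i • (A ^ (i : ℕ)) *ᵥ v)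
          = (A ^ (k - 1 - m)).mulVecLin (∑ i : Fin k, g i • (A ^ (i : ℕ)) *ᵥ v) from rfl, map_sum]
        refine Finset.sum_congr rfl fun i _ => ?_
        rw [Matrix.mulVecLin_apply, Matrix.mulVec_smul, Matrix.mulVec_mulVec, ← pow_add]
      rw [Finset.sum_eq_single (⟨m, hm⟩ : Fin k)] at h2
      · have hne' : (A ^ (k - 1)) *ᵥ v ≠ 0 := hne (k - 1) (by omega)
        rw [show (k - 1 - m + ((⟨m, hm⟩ : Fin k) : ℕ)) = k - 1 by simp; omega] at h2
        rcases smul_eq_zero.mp h2 with h | h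
        · exact h
        · exact absurd h hne'
      · intro b _ hbne
        rcases Nat.lt_or_ge (b : ℕ) m with hb | hb
        · rw [IH b hb b.isLt, zero_smul]
        · have hbm : m < (b : ℕ) := by
            rcases Nat.eq_or_lt_of_le hb with h | h
            · exact absurd (Fin.ext h.symm : b = ⟨m, hm⟩) hbne
            · exact h
          rw [hz (k - 1 - m + (b : ℕ)) (by omega), smul_zero]
      · intro h
        exact absurd (Finset.mem_univ _) h
  intro i
  have := key (i : ℕ) i.isLt
  simpa using this

lemma FH.exists_unit {n k : ℕ} (hk : k ≤ n) (s : Fin k → (Fin n → F))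
    (hs : LinearIndependent F s) :
    ∃ g : (Matrix (Fin n) (Fin n) F)ˣ,
      ∀ i : Fin k, (g : Matrix (Fin n) (Fin n) F) *ᵥ Pi.single (Fin.castLE hk i) 1 = s i := by
  classical
  set W := Submodule.span F (Set.range s) with hWdef
  obtain ⟨U, hU⟩ := Submodule.exists_isCompl W
  let b1 : Module.Basis (Fin k) F W := Module.Basis.span hs
  have hW : Module.finrank F W = k := by
    rw [hWdef, finrank_span_eq_card hs, Fintype.card_fin]
  have hsum : k + Module.finrank F U = n := by
    have := Submodule.finrank_add_eq_of_isCompl hU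
    rw [hW] at this
    rw [this, Module.finrank_fintype_fun_eq_card, Fintype.card_fin]
  let b2 : Module.Basis (Fin (Module.finrank F U)) F U := Module.finBasis F U
  let b4 : Module.Basis (Fin k ⊕ Fin (Module.finrank F U)) F (Fin n → F) :=
    (b1.prod b2).map (Submodule.prodEquivOfIsCompl W U hU)
  let e : (Fin k ⊕ Fin (Module.finrank F U)) ≃ Fin n :=
    finSumFinEquiv.trans (finCongr hsum)
  let b : Module.Basis (Fin n) F (Fin n → F) := b4.reindex e
  have hb : ∀ i : Fin k, b (Fin.castLE hk i) = s i := by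
    intro i
    have he : e (Sum.inl i) = Fin.castLE hk i := by
      simp only [e, Equiv.trans_apply, finSumFinEquiv_apply_left, finCongr_apply]
      ext; simp
    rw [← he, Module.Basis.reindex_apply, Equiv.symm_apply_apply]
    show (Submodule.prodEquivOfIsCompl W U hU) ((b1.prod b2) (Sum.inl i)) = s i
    rw [Submodule.coe_prodEquivOfIsCompl']
    rw [show ((b1.prod b2) (Sum.inl i)).1 = b1 i from Module.Basis.prod_apply_inl_fst _ _ _,
      show ((b1.prod b2) (Sum.inl i)).2 = 0 from Module.Basis.prod_apply_inl_snd _ _ _]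
    simp only [Submodule.coe_zero, add_zero]
    exact congrArg Subtype.val (Module.Basis.span_apply hs i)
  let M := (Pi.basisFun F (Fin n)).toMatrix b
  have hM : Invertible M := (Pi.basisFun F (Fin n)).invertibleToMatrix b
  refine ⟨unitOfInvertible M, fun i => ?_⟩
  rw [show ((unitOfInvertible M : (Matrix (Fin n) (Fin n) F)ˣ) : Matrix (Fin n) (Fin n) F)
    = M from rfl]
  funext r
  rw [Matrix.mulVec_single]
  simp only [Pi.smul_apply, op_smul_eq_mul, mul_one, Matrix.col_apply]
  show (Pi.basisFun F (Fin n)).repr (b (Fin.castLE hk i)) r = s i r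
  rw [hb i]
  simp

/-- Number of nilpotent `m × m` matrices. -/
def FHN (F : Type) [Field F] [Fintype F] [DecidableEq F] (m : ℕ) : ℕ :=
  Nat.card {X : Matrix (Fin m) (Fin m) F // IsNilpotent X}

def FH.nxt {n k : ℕ} (s : Fin k → (Fin n → F)) (i : Fin k) : Fin n → F :=
  if h : (i : ℕ) + 1 < k then s ⟨(i : ℕ) + 1, h⟩ else 0

abbrev FH.Fib {n k : ℕ} (s : Fin k → (Fin n → F)) : Type :=
  {A : Matrix (Fin n) (Fin n) F // IsNilpotent A ∧ ∀ i : Fin k, A *ᵥ s i = FH.nxt s i}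

lemma FH.card_matrix (a b : ℕ) :
    Nat.card (Matrix (Fin a) (Fin b) F) = Fintype.card F ^ (a * b) := by
  rw [Nat.card_eq_fintype_card]
  have : Fintype.card (Matrix (Fin a) (Fin b) F) = Fintype.card (Fin a → Fin b → F) :=
    Fintype.card_congr Matrix.of.symm
  rw [this, Fintype.card_fun, Fintype.card_fun, Fintype.card_fin, Fintype.card_fin, ← pow_mul, Nat.mul_comm b a]

lemma FH.card_fib_conj {n k : ℕ} (hk : k ≤ n) (s : Fin k → (Fin n → F))
    (hs : LinearIndependent F s) :
    Nat.card (FH.Fib s) =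
      Nat.card (FH.Fib (fun i : Fin k => Pi.single (Fin.castLE hk i) (1 : F))) := by
  obtain ⟨g, hg⟩ := FH.exists_unit hk s hs
  set std : Fin k → (Fin n → F) := fun i => Pi.single (Fin.castLE hk i) (1 : F) with hstd
  set G : Matrix (Fin n) (Fin n) F := (g : Matrix (Fin n) (Fin n) F) with hG
  set Gi : Matrix (Fin n) (Fin n) F :=
    ((g⁻¹ : (Matrix (Fin n) (Fin n) F)ˣ) : Matrix (Fin n) (Fin n) F) with hGi
  have hgi : G * Gi = 1 := by rw [hG, hGi, ← Units.val_mul, mul_inv_cancel, Units.val_one]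
  have hig : Gi * G = 1 := by rw [hG, hGi, ← Units.val_mul, inv_mul_cancel, Units.val_one]
  have hGstd : ∀ i : Fin k, G *ᵥ std i = s i := hg
  have hGis : ∀ i : Fin k, Gi *ᵥ s i = std i := by
    intro i
    rw [← hGstd i, Matrix.mulVec_mulVec, hig, Matrix.one_mulVec]
  have hnil : ∀ A : Matrix (Fin n) (Fin n) F, IsNilpotent (Gi * A * G) ↔ IsNilpotent A := by
    intro A
    have := FH.isNilpotent_conj_iff (F := F) g⁻¹ A
    rw [inv_inv] at this
    exact this
  refine Nat.card_congr ⟨fun p => ⟨Gi * p.1 * G, ?_, ?_⟩, fun p => ⟨G * p.1 * Gi, ?_, ?_⟩,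
    ?_, ?_⟩
  · exact (hnil p.1).mpr p.2.1
  · intro i
    have hcol := p.2.2 i
    rw [← Matrix.mulVec_mulVec, ← Matrix.mulVec_mulVec, hGstd, hcol, FH.nxt]
    by_cases h : (i : ℕ) + 1 < k
    · rw [dif_pos h, hGis, FH.nxt, dif_pos h]
    · rw [dif_neg h, FH.nxt, dif_neg h, Matrix.mulVec_zero]
  · have := FH.isNilpotent_conj_iff (F := F) g p.1
    exact this.mpr p.2.1
  · intro i
    have hcol := p.2.2 i
    rw [← Matrix.mulVec_mulVec, ← Matrix.mulVec_mulVec, hGis, hcol, FH.nxt]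
    by_cases h : (i : ℕ) + 1 < k
    · rw [dif_pos h, hGstd, FH.nxt, dif_pos h]
    · rw [dif_neg h, FH.nxt, dif_neg h, Matrix.mulVec_zero]
  · intro p
    apply Subtype.ext
    show G * (Gi * p.1 * G) * Gi = p.1
    calc G * (Gi * p.1 * G) * Gi = (G * Gi) * p.1 * (G * Gi) := by noncomm_ring
      _ = p.1 := by rw [hgi]; noncomm_ring
  · intro p
    apply Subtype.ext
    show Gi * (G * p.1 * Gi) * G = p.1
    calc Gi * (G * p.1 * Gi) * G = (Gi * G) * p.1 * (Gi * G) := by noncomm_ring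
      _ = p.1 := by rw [hig]; noncomm_ring

section Std

variable {n k m : ℕ}

lemma FH.cond_iff (hk : k ≤ n) (h : k + m = n) (A : Matrix (Fin n) (Fin n) F) :
    (∀ i : Fin k, A *ᵥ Pi.single (Fin.castLE hk i) (1 : F) =
        FH.nxt (fun i : Fin k => Pi.single (Fin.castLE hk i) (1 : F)) i) ↔
      ((Matrix.reindexAlgEquiv F F (finSumFinEquiv.trans (finCongr h)).symm A).toBlocks₁₁
          = FH.nilJ k ∧
        (Matrix.reindexAlgEquiv F F (finSumFinEquiv.trans (finCongr h)).symm A).toBlocks₂₁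
          = 0) := by
  set e : (Fin k ⊕ Fin m) ≃ Fin n := finSumFinEquiv.trans (finCongr h) with he
  have hl : ∀ i : Fin k, (e (Sum.inl i) : ℕ) = (i : ℕ) := by
    intro i; simp [he]
  have hr : ∀ b : Fin m, (e (Sum.inr b) : ℕ) = k + (b : ℕ) := by
    intro b; simp [he]
  have hentry : ∀ (x : Fin k ⊕ Fin m) (y : Fin k ⊕ Fin m),
      (Matrix.reindexAlgEquiv F F e.symm A) x y = A (e x) (e y) := by
    intro x y
    simp [Matrix.reindexAlgEquiv_apply, Matrix.reindex_apply, Matrix.submatrix_apply]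
  have hlcast : ∀ i : Fin k, e (Sum.inl i) = Fin.castLE hk i := by
    intro i; ext; rw [hl]; simp
  have hcond : ∀ (i : Fin k) (r : Fin n),
      FH.nxt (fun i : Fin k => Pi.single (Fin.castLE hk i) (1 : F)) i r
        = if ((r : ℕ) = (i : ℕ) + 1 ∧ (i : ℕ) + 1 < k) then 1 else 0 := by
    intro i r
    rw [FH.nxt]
    by_cases hik : (i : ℕ) + 1 < k
    · rw [dif_pos hik, Pi.single_apply]
      have : (r = Fin.castLE hk ⟨(i : ℕ) + 1, hik⟩) ↔ ((r : ℕ) = (i : ℕ) + 1) := by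
        rw [Fin.ext_iff]; simp
      simp only [this]
      by_cases hre : (r : ℕ) = (i : ℕ) + 1
      · rw [if_pos hre, if_pos ⟨hre, hik⟩]
      · rw [if_neg hre, if_neg (fun hc => hre hc.1)]
    · rw [dif_neg hik, if_neg (fun hc => hik hc.2)]
      rfl
  have hmv : ∀ (i : Fin k) (B : Matrix (Fin n) (Fin n) F),
      B *ᵥ Pi.single (Fin.castLE hk i) (1 : F) = fun r => B r (Fin.castLE hk i) := by
    intro i B
    have := Matrix.mulVec_single B (Fin.castLE hk i) (1 : F)
    rw [this]; ext r; simp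
  constructor
  · intro hc
    constructor
    · ext a i
      have := congrFun (hc i) (e (Sum.inl a))
      rw [hmv] at this
      dsimp only at this
      rw [Matrix.toBlocks₁₁, Matrix.of_apply, hentry, hlcast i, this, hcond, FH.nilJ,
        Matrix.of_apply, hl]
      by_cases ha : (a : ℕ) = (i : ℕ) + 1
      · rw [if_pos ha, if_pos ⟨ha, by omega⟩]
      · rw [if_neg ha, if_neg (fun hc' => ha hc'.1)]
    · ext b i
      have := congrFun (hc i) (e (Sum.inr b))
      rw [hmv] at this
      dsimp only at this
      rw [Matrix.toBlocks₂₁, Matrix.of_apply, hentry, hlcast i, this, hcond, Matrix.zero_apply,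
        hr]
      rw [if_neg]
      rintro ⟨h1, h2⟩
      omega
  · rintro ⟨h11, h21⟩ i
    rw [hmv]
    funext r
    rw [hcond]
    obtain ⟨x, rfl⟩ := e.surjective r
    cases x with
    | inl a =>
        have := congrFun (congrFun h11 a) i
        rw [Matrix.toBlocks₁₁, Matrix.of_apply, hentry, hlcast i, FH.nilJ, Matrix.of_apply]
          at this
        rw [this, hl]
        by_cases ha : (a : ℕ) = (i : ℕ) + 1
        · rw [if_pos ha, if_pos ⟨ha, by omega⟩]
        · rw [if_neg ha, if_neg (fun hc' => ha hc'.1)]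
    | inr b =>
        have := congrFun (congrFun h21 b) i
        rw [Matrix.toBlocks₂₁, Matrix.of_apply, hentry, hlcast i, Matrix.zero_apply] at this
        rw [this, hr, if_neg]
        rintro ⟨h1, h2⟩
        omega

end Std

lemma FH.card_fib_std {n k m : ℕ} (hk : k ≤ n) (h : k + m = n) :
    Nat.card (FH.Fib (fun i : Fin k => Pi.single (Fin.castLE hk i) (1 : F))) =
      Fintype.card F ^ (k * m) * FHN F m := by
  set ρ := Matrix.reindexAlgEquiv F F (finSumFinEquiv.trans (finCongr h)).symm with hρ
  have hnil : ∀ A : Matrix (Fin n) (Fin n) F, IsNilpotent A ↔ IsNilpotent (ρ A) := by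
    intro A
    constructor
    · rintro ⟨p, hp⟩; exact ⟨p, by rw [← map_pow, hp, map_zero]⟩
    · rintro ⟨p, hp⟩
      refine ⟨p, ?_⟩
      have : ρ (A ^ p) = ρ 0 := by rw [map_pow, hp, map_zero]
      exact ρ.injective this
  have E : FH.Fib (fun i : Fin k => Pi.single (Fin.castLE hk i) (1 : F)) ≃
      (Matrix (Fin k) (Fin m) F × {C : Matrix (Fin m) (Fin m) F // IsNilpotent C}) := by
    refine ⟨fun p => ((ρ p.1).toBlocks₁₂, ⟨(ρ p.1).toBlocks₂₂, ?_⟩),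
      fun q => ⟨ρ.symm (Matrix.fromBlocks (FH.nilJ k) q.1 0 q.2.1), ?_, ?_⟩, ?_, ?_⟩
    · obtain ⟨A, hA, hcol⟩ := p
      have hblocks := (FH.cond_iff hk h A).mp hcol
      have hfb : ρ A = Matrix.fromBlocks (FH.nilJ k) (ρ A).toBlocks₁₂ 0 (ρ A).toBlocks₂₂ := by
        conv_lhs => rw [← Matrix.fromBlocks_toBlocks (ρ A)]
        rw [hblocks.1, hblocks.2]
      have := (hnil A).mp hA
      rw [hfb] at this
      exact (FH.isNilpotent_fromBlocks_iff _ _).mp this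
    · apply (hnil _).mpr
      rw [AlgEquiv.apply_symm_apply]
      exact (FH.isNilpotent_fromBlocks_iff _ _).mpr q.2.2
    · apply (FH.cond_iff hk h _).mpr
      rw [AlgEquiv.apply_symm_apply]
      exact ⟨Matrix.toBlocks_fromBlocks₁₁ _ _ _ _, Matrix.toBlocks_fromBlocks₂₁ _ _ _ _⟩
    · rintro ⟨A, hA, hcol⟩
      apply Subtype.ext
      show ρ.symm (Matrix.fromBlocks (FH.nilJ k) (ρ A).toBlocks₁₂ 0 (ρ A).toBlocks₂₂) = A
      have hblocks := (FH.cond_iff hk h A).mp hcol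
      rw [← hblocks.1, ← hblocks.2, Matrix.fromBlocks_toBlocks, AlgEquiv.symm_apply_apply]
    · rintro ⟨B, C, hC⟩
      refine Prod.ext ?_ (Subtype.ext ?_)
      · show (ρ (ρ.symm (Matrix.fromBlocks (FH.nilJ k) B 0 C))).toBlocks₁₂ = B
        rw [AlgEquiv.apply_symm_apply, Matrix.toBlocks_fromBlocks₁₂]
      · show (ρ (ρ.symm (Matrix.fromBlocks (FH.nilJ k) B 0 C))).toBlocks₂₂ = C
        rw [AlgEquiv.apply_symm_apply, Matrix.toBlocks_fromBlocks₂₂]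
  rw [Nat.card_congr E, Nat.card_prod, FH.card_matrix, FHN]

lemma FH.nat_card_sigma {ι : Type*} [Fintype ι] (f : ι → Type*) [∀ i, Finite (f i)] :
    Nat.card (Σ i, f i) = ∑ i, Nat.card (f i) := by
  classical
  letI : ∀ i, Fintype (f i) := fun i => Fintype.ofFinite _
  rw [Nat.card_eq_fintype_card, Fintype.card_sigma]
  exact Finset.sum_congr rfl fun i _ => (Nat.card_eq_fintype_card).symm

lemma FH.sigma_ext {n k : ℕ}
    (x y : Σ s : {s : Fin k → (Fin n → F) // LinearIndependent F s}, FH.Fib (F := F) s.1)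
    (h1 : x.1.1 = y.1.1) (h2 : x.2.1 = y.2.1) : x = y := by
  obtain ⟨⟨s, hs⟩, b⟩ := x
  obtain ⟨⟨s', hs'⟩, b'⟩ := y
  dsimp only at h1 h2
  subst h1
  have : b = b' := Subtype.ext h2
  subst this
  rfl

lemma FH.card_fiber {n k : ℕ} (hk : k ≤ n) :
    Nat.card {p : Matrix (Fin n) (Fin n) F × (Fin n → F) //
        IsNilpotent p.1 ∧ (p.1 ^ k) *ᵥ p.2 = 0 ∧ ∀ j < k, (p.1 ^ j) *ᵥ p.2 ≠ 0} =
      (∏ i ∈ Finset.range k, (Fintype.card F ^ n - Fintype.card F ^ i)) *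
        (Fintype.card F ^ (k * (n - k)) * FHN F (n - k)) := by
  classical
  have hiter : ∀ (A : Matrix (Fin n) (Fin n) F) (s : Fin k → Fin n → F),
      (∀ i : Fin k, A *ᵥ s i = FH.nxt s i) →
      ∀ i : Fin k, (A ^ (i : ℕ)) *ᵥ (if h0 : 0 < k then s ⟨0, h0⟩ else 0) = s i := by
    intro A s hcol
    have key : ∀ iv (hiv : iv < k),
        (A ^ iv) *ᵥ (if h0 : 0 < k then s ⟨0, h0⟩ else 0) = s ⟨iv, hiv⟩ := by
      intro iv
      induction iv with
      | zero =>
          intro hiv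
          rw [dif_pos (by omega : 0 < k), pow_zero, Matrix.one_mulVec]
      | succ j ihj =>
          intro hiv
          have hj : j < k := by omega
          rw [pow_succ', ← Matrix.mulVec_mulVec, ihj hj, hcol ⟨j, hj⟩, FH.nxt,
            dif_pos (by simpa using hiv)]
    intro i
    simpa using key (i : ℕ) i.isLt
  have Ψ : {p : Matrix (Fin n) (Fin n) F × (Fin n → F) //
        IsNilpotent p.1 ∧ (p.1 ^ k) *ᵥ p.2 = 0 ∧ ∀ j < k, (p.1 ^ j) *ᵥ p.2 ≠ 0} ≃
      Σ s : {s : Fin k → (Fin n → F) // LinearIndependent F s}, FH.Fib (F := F) s.1 := by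
    refine ⟨fun p => ⟨⟨fun i => (p.1.1 ^ (i : ℕ)) *ᵥ p.1.2,
        FH.indep_iterates p.1.1 p.1.2 p.2.2.1 p.2.2.2⟩, ⟨p.1.1, p.2.1, ?_⟩⟩,
      fun x => ⟨(x.2.1, if h0 : 0 < k then x.1.1 ⟨0, h0⟩ else 0), x.2.2.1, ?_, ?_⟩, ?_, ?_⟩
    · intro i
      rw [Matrix.mulVec_mulVec, ← pow_succ', FH.nxt]
      by_cases h : (i : ℕ) + 1 < k
      · rw [dif_pos h]
      · rw [dif_neg h, show (i : ℕ) + 1 = k by have := i.isLt; omega]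
        exact p.2.2.1
    · obtain ⟨⟨s, hs⟩, ⟨A, hA, hcol⟩⟩ := x
      dsimp only
      by_cases h0 : 0 < k
      · have hkk : k - 1 + 1 = k := by omega
        have step : (A ^ (k - 1 + 1)) *ᵥ (if h0 : 0 < k then s ⟨0, h0⟩ else 0) = 0 := by
          rw [pow_succ', ← Matrix.mulVec_mulVec, hiter A s hcol ⟨k - 1, by omega⟩,
            hcol ⟨k - 1, by omega⟩, FH.nxt, dif_neg (by simp; omega)]
        rw [hkk] at step
        exact step
      · rw [dif_neg h0, show k = 0 by omega, pow_zero, Matrix.one_mulVec]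
    · obtain ⟨⟨s, hs⟩, ⟨A, hA, hcol⟩⟩ := x
      dsimp only
      intro j hj
      have := hiter A s hcol ⟨j, hj⟩
      rw [this]
      exact hs.ne_zero ⟨j, hj⟩
    · rintro ⟨⟨A, v⟩, hA, h1, h2⟩
      apply Subtype.ext
      apply Prod.ext
      · rfl
      · show (if h0 : 0 < k then (A ^ ((⟨0, h0⟩ : Fin k) : ℕ)) *ᵥ v else 0) = v
        by_cases h0 : 0 < k
        · rw [dif_pos h0]
          show (A ^ (0 : ℕ)) *ᵥ v = v
          rw [pow_zero, Matrix.one_mulVec]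
        · rw [dif_neg h0]
          have := h1
          rw [show k = 0 by omega, pow_zero, Matrix.one_mulVec] at this
          exact this.symm
    · intro x
      apply FH.sigma_ext
      · funext i
        exact hiter x.2.1 x.1.1 x.2.2.2 i
      · rfl
  rw [Nat.card_congr Ψ, FH.nat_card_sigma]
  have hconst : ∀ s : {s : Fin k → (Fin n → F) // LinearIndependent F s},
      Nat.card (FH.Fib (F := F) s.1) =
        Fintype.card F ^ (k * (n - k)) * FHN F (n - k) := by
    intro s
    rw [FH.card_fib_conj hk s.1 s.2, FH.card_fib_std hk (by omega : k + (n - k) = n)]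
  rw [Finset.sum_congr rfl (fun s _ => hconst s), Finset.sum_const, smul_eq_mul]
  congr 1
  rw [Finset.card_univ, ← Nat.card_eq_fintype_card]
  have := card_linearIndependent (K := F) (V := Fin n → F)
    (k := k) (by rw [Module.finrank_fintype_fun_eq_card, Fintype.card_fin]; exact hk)
  rw [this]
  rw [Module.finrank_fintype_fun_eq_card, Fintype.card_fin]
  exact Fin.prod_univ_eq_prod_range (fun j => Fintype.card F ^ n - Fintype.card F ^ j) k

lemma FH.identity (q : ℕ) (hq : 1 ≤ q) (n : ℕ) :
    ∑ k ∈ Finset.range (n + 1),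
      (∏ i ∈ Finset.range k, (q ^ n - q ^ i)) * q ^ ((n - k) * (n - 1)) = q ^ (n * n) := by
  induction n with
  | zero => simp
  | succ n ih =>
      rw [Finset.sum_range_succ']
      have hterm : ∀ k ∈ Finset.range (n + 1),
          (∏ i ∈ Finset.range (k + 1), (q ^ (n + 1) - q ^ i)) *
              q ^ ((n + 1 - (k + 1)) * (n + 1 - 1)) =
            (q ^ (n + 1) - 1) * q ^ n *
              ((∏ i ∈ Finset.range k, (q ^ n - q ^ i)) * q ^ ((n - k) * (n - 1))) := by
        intro k hk
        rw [Finset.mem_range] at hk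
        have hprod : ∏ i ∈ Finset.range (k + 1), (q ^ (n + 1) - q ^ i) =
            (q ^ (n + 1) - 1) * (q ^ k * ∏ i ∈ Finset.range k, (q ^ n - q ^ i)) := by
          rw [Finset.prod_range_succ']
          have : ∀ i ∈ Finset.range k, q ^ (n + 1) - q ^ (i + 1) = q * (q ^ n - q ^ i) := by
            intro i _
            rw [Nat.mul_sub, ← pow_succ', ← pow_succ']
          rw [Finset.prod_congr rfl this, Finset.prod_mul_distrib, Finset.prod_const,
            Finset.card_range, pow_zero, mul_comm]
        rw [hprod]
        have hexp : (n + 1 - (k + 1)) * (n + 1 - 1) = (n - k) * n := by simp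
        rw [hexp]
        have hexp2 : q ^ k * q ^ ((n - k) * n) = q ^ n * q ^ ((n - k) * (n - 1)) := by
          rw [← pow_add, ← pow_add]
          congr 1
          have h1 : (n - k) * n = (n - k) * (n - 1) + (n - k) := by
            rcases Nat.eq_zero_or_pos n with rfl | hn
            · simp
            · rw [Nat.mul_sub_one]
              have : n - k ≤ (n - k) * n := Nat.le_mul_of_pos_right _ hn
              omega
          rw [h1]
          have : k + (n - k) = n := by omega
          omega
        have hexp2' : q ^ k * q ^ ((n - k) * n) = q ^ n * q ^ ((n - k) * (n - 1)) := hexp2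
        calc (q ^ (n + 1) - 1) * (q ^ k * ∏ i ∈ Finset.range k, (q ^ n - q ^ i)) *
              q ^ ((n - k) * n)
            = (q ^ (n + 1) - 1) *
              (q ^ k * q ^ ((n - k) * n) * ∏ i ∈ Finset.range k, (q ^ n - q ^ i)) := by ring
          _ = (q ^ (n + 1) - 1) *
              (q ^ n * q ^ ((n - k) * (n - 1)) * ∏ i ∈ Finset.range k, (q ^ n - q ^ i)) := by
                rw [hexp2']
          _ = (q ^ (n + 1) - 1) * q ^ n *
              ((∏ i ∈ Finset.range k, (q ^ n - q ^ i)) * q ^ ((n - k) * (n - 1))) := by ring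
      rw [Finset.sum_congr rfl hterm, ← Finset.mul_sum, ih]
      have h0 : (∏ i ∈ Finset.range 0, (q ^ (n + 1) - q ^ i)) *
          q ^ ((n + 1 - 0) * (n + 1 - 1)) = q ^ ((n + 1) * n) := by simp
      rw [h0]
      have hXeq : q ^ ((n + 1) * n) = q ^ n * q ^ (n * n) := by
        rw [← pow_add]; congr 1; ring
      have key : (q ^ (n + 1) - 1) * q ^ n * q ^ (n * n) + q ^ ((n + 1) * n)
          = q ^ (n + 1) * (q ^ n * q ^ (n * n)) := by
        rw [hXeq, mul_assoc, Nat.sub_one_mul,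
          Nat.sub_add_cancel (Nat.le_mul_of_pos_left _ (by positivity : 0 < q ^ (n + 1)))]
      rw [key, ← pow_add, ← pow_add]
      congr 1
      ring

lemma FH.recursion (n : ℕ) :
    Fintype.card F ^ n * FHN F n =
      ∑ k ∈ Finset.range (n + 1),
        (∏ i ∈ Finset.range k, (Fintype.card F ^ n - Fintype.card F ^ i)) *
          (Fintype.card F ^ (k * (n - k)) * FHN F (n - k)) := by
  classical
  set T := {p : Matrix (Fin n) (Fin n) F × (Fin n → F) // IsNilpotent p.1} with hT
  have hTa : Nat.card T = Fintype.card F ^ n * FHN F n := by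
    have e1 : T ≃ ((Fin n → F) × {X : Matrix (Fin n) (Fin n) F // IsNilpotent X}) :=
      ⟨fun p => (p.1.2, ⟨p.1.1, p.2⟩), fun x => ⟨(x.2.1, x.1), x.2.2⟩,
        fun p => rfl, fun x => rfl⟩
    rw [Nat.card_congr e1, Nat.card_prod, FHN]
    congr 1
    rw [Nat.card_eq_fintype_card, Fintype.card_fun, Fintype.card_fin]
  have hex : ∀ p : T, ∃ j, (p.1.1 ^ j) *ᵥ p.1.2 = 0 := fun p =>
    ⟨n, by rw [FH.pow_eq_zero p.1.1 p.2, Matrix.zero_mulVec]⟩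
  let ℓ : T → Fin (n + 1) := fun p => ⟨Nat.find (hex p), by
    have : Nat.find (hex p) ≤ n :=
      Nat.find_le (by rw [FH.pow_eq_zero p.1.1 p.2, Matrix.zero_mulVec])
    omega⟩
  have hsplit : Nat.card T = ∑ k : Fin (n + 1), Nat.card {p : T // ℓ p = k} := by
    rw [Nat.card_congr (Equiv.sigmaFiberEquiv ℓ).symm, FH.nat_card_sigma]
  have hfib : ∀ k : Fin (n + 1), Nat.card {p : T // ℓ p = k} =
      (∏ i ∈ Finset.range (k : ℕ), (Fintype.card F ^ n - Fintype.card F ^ i)) *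
        (Fintype.card F ^ ((k : ℕ) * (n - (k : ℕ))) * FHN F (n - (k : ℕ))) := by
    intro k
    have e2 : {p : T // ℓ p = k} ≃ {p : Matrix (Fin n) (Fin n) F × (Fin n → F) //
        IsNilpotent p.1 ∧ (p.1 ^ (k : ℕ)) *ᵥ p.2 = 0 ∧
          ∀ j < (k : ℕ), (p.1 ^ j) *ᵥ p.2 ≠ 0} := by
      refine ⟨fun p => ⟨p.1.1, p.1.2, ?_, ?_⟩, fun r => ⟨⟨r.1, r.2.1⟩, ?_⟩, ?_, ?_⟩
      · have : Nat.find (hex p.1) = (k : ℕ) := by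
          have := p.2
          rw [Fin.ext_iff] at this
          exact this
        rw [← this]
        exact Nat.find_spec (hex p.1)
      · intro j hj
        have : Nat.find (hex p.1) = (k : ℕ) := by
          have := p.2
          rw [Fin.ext_iff] at this
          exact this
        exact Nat.find_min (hex p.1) (by omega)
      · apply Fin.ext
        show Nat.find (hex ⟨r.1, r.2.1⟩) = (k : ℕ)
        rw [Nat.find_eq_iff]
        exact ⟨r.2.2.1, fun j hj hz => r.2.2.2 j hj hz⟩
      · intro p
        apply Subtype.ext
        apply Subtype.ext
        rfl
      · intro r
        apply Subtype.ext
        rfl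
    rw [Nat.card_congr e2]
    exact FH.card_fiber (by have := k.isLt; omega)
  rw [← hTa, hsplit, Finset.sum_congr rfl (fun k _ => hfib k)]
  exact Fin.sum_univ_eq_sum_range (fun k =>
    (∏ i ∈ Finset.range k, (Fintype.card F ^ n - Fintype.card F ^ i)) *
      (Fintype.card F ^ (k * (n - k)) * FHN F (n - k))) (n + 1)

lemma FH.count (n : ℕ) : FHN F n = Fintype.card F ^ (n * n - n) := by
  induction n using Nat.strong_induction_on with
  | _ n IH =>
    have hq : 2 ≤ Fintype.card F := Fintype.one_lt_card
    rcases Nat.eq_zero_or_pos n with rfl | hn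
    · have : Unique {X : Matrix (Fin 0) (Fin 0) F // IsNilpotent X} :=
        ⟨⟨⟨0, ⟨1, by simp⟩⟩⟩, fun x => Subtype.ext (Subsingleton.elim _ _)⟩
      rw [FHN, Nat.card_unique]
      simp
    · have hrec := FH.recursion (F := F) n
      have hid := FH.identity (Fintype.card F) (by omega) n
      set q := Fintype.card F with hqdef
      have hterm : ∀ k ∈ Finset.range n,
          (∏ i ∈ Finset.range (k + 1), (q ^ n - q ^ i)) *
              (q ^ ((k + 1) * (n - (k + 1))) * FHN F (n - (k + 1))) =
            (∏ i ∈ Finset.range (k + 1), (q ^ n - q ^ i)) *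
              q ^ ((n - (k + 1)) * (n - 1)) := by
        intro k hk
        rw [Finset.mem_range] at hk
        rw [IH (n - (k + 1)) (by omega), ← pow_add]
        congr 2
        set d := n - (k + 1) with hd
        have hdn : (k + 1) + d = n := by omega
        rcases Nat.eq_zero_or_pos d with hd0 | hdpos
        · rw [hd0]; simp
        · have h2 : d ≤ d * d := Nat.le_mul_of_pos_left _ hdpos
          have h3 : d * (n - 1) = d * n - d := Nat.mul_sub_one d n
          have h4 : (k + 1) * d + d * d = n * d := by rw [← Nat.add_mul, hdn]
          have h5 : d * n = n * d := Nat.mul_comm d n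
          omega
      rw [Finset.sum_range_succ'] at hrec hid
      rw [Finset.sum_congr rfl hterm] at hrec
      simp only [Finset.prod_range_zero, Nat.sub_zero, Nat.zero_mul, pow_zero, one_mul]
        at hrec hid
      -- now hrec : q ^ n * FHN F n = S + FHN F n, hid : S + q ^ (n * (n-1)) = q ^ (n * n)
      set N := FHN F n with hN
      set c := q ^ (n * (n - 1)) with hc
      have hpow : q ^ (n * n) = c * q ^ n := by
        rw [hc, ← pow_add]
        congr 1
        have h3 : n * (n - 1) = n * n - n := Nat.mul_sub_one n n
        have h4 : n ≤ n * n := Nat.le_mul_of_pos_left _ hn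
        omega
      have hmain : q ^ n * N + c = c * q ^ n + N := by
        rw [hrec, ← hpow, ← hid]
        omega
      have hcast : ((q : ℤ) ^ n) * (N : ℤ) + (c : ℤ) = (c : ℤ) * (q : ℤ) ^ n + (N : ℤ) := by
        exact_mod_cast hmain
      have hfac : ((N : ℤ) - (c : ℤ)) * ((q : ℤ) ^ n - 1) = 0 := by linear_combination hcast
      have hqn : (2 : ℤ) ≤ (q : ℤ) ^ n := by
        have : (2 : ℕ) ≤ q ^ n := le_trans hq (Nat.le_self_pow (by omega) q)
        exact_mod_cast this
      have hNc : (N : ℤ) = (c : ℤ) := by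
        rcases mul_eq_zero.mp hfac with h | h
        · linarith
        · linarith
      have : N = c := by exact_mod_cast hNc
      rw [this, hc]
      congr 1
      have h3 : n * (n - 1) = n * n - n := Nat.mul_sub_one n n
      omega

/-- Let `𝒩 ⊂ M_n(F_q)` be the nilpotent cone and
`f̂(Y) = Σ_{X nilpotent} φ(tr(XY))` the Fourier transform of its characteristic function.
Then `f̂` depends only on the conjugacy class of `Y`, and `f̂(0) = |𝒩| = q^{n²−n}`
(Fine–Herstein). -/
theorem stmt12 (n : ℕ) (F : Type) [Field F] [Fintype F] [DecidableEq F]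
    (φ : AddChar F ℂ) (hφ : ∃ x : F, φ x ≠ 1) :
    (∀ (g : GL (Fin n) F) (Y : Matrix (Fin n) (Fin n) F),
        (∑ X : Matrix (Fin n) (Fin n) F,
            if IsNilpotent X then φ (Matrix.trace (X * (g.val * Y * (↑g⁻¹ : Matrix (Fin n) (Fin n) F)))) else 0)
          = ∑ X : Matrix (Fin n) (Fin n) F,
              if IsNilpotent X then φ (Matrix.trace (X * Y)) else 0) ∧
    ((∑ X : Matrix (Fin n) (Fin n) F, if IsNilpotent X then φ (Matrix.trace (X * 0)) else 0)
        = (Fintype.card F : ℂ) ^ (n ^ 2 - n)) ∧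
    (Nat.card {X : Matrix (Fin n) (Fin n) F // IsNilpotent X}
        = Fintype.card F ^ (n ^ 2 - n)) := by
  have h3 : Nat.card {X : Matrix (Fin n) (Fin n) F // IsNilpotent X}
      = Fintype.card F ^ (n ^ 2 - n) := by
    rw [show n ^ 2 = n * n from sq n]
    exact FH.count (F := F) n
  refine ⟨?_, ?_, h3⟩
  · intro g Y
    set G : Matrix (Fin n) (Fin n) F := (g : Matrix (Fin n) (Fin n) F) with hG
    set Gi : Matrix (Fin n) (Fin n) F :=
      ((g⁻¹ : (Matrix (Fin n) (Fin n) F)ˣ) : Matrix (Fin n) (Fin n) F) with hGi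
    have hgi : G * Gi = 1 := by rw [hG, hGi, ← Units.val_mul, mul_inv_cancel, Units.val_one]
    have hig : Gi * G = 1 := by rw [hG, hGi, ← Units.val_mul, inv_mul_cancel, Units.val_one]
    refine Fintype.sum_equiv
      ⟨fun X => Gi * X * G, fun X => G * X * Gi, ?_, ?_⟩ _ _ ?_
    · intro X
      show G * (Gi * X * G) * Gi = X
      calc G * (Gi * X * G) * Gi = (G * Gi) * X * (G * Gi) := by noncomm_ring
        _ = X := by rw [hgi]; noncomm_ring
    · intro X
      show Gi * (G * X * Gi) * G = X
      calc Gi * (G * X * Gi) * G = (Gi * G) * X * (Gi * G) := by noncomm_ring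
        _ = X := by rw [hig]; noncomm_ring
    · intro X
      have hnil : IsNilpotent X ↔ IsNilpotent (Gi * X * G) := by
        have := FH.isNilpotent_conj_iff (F := F) g⁻¹ X
        rw [inv_inv] at this
        exact this.symm
      have htr : Matrix.trace (X * (G * Y * Gi)) = Matrix.trace ((Gi * X * G) * Y) := by
        rw [show (Gi * X * G) * Y = Gi * (X * (G * Y)) by noncomm_ring,
          Matrix.trace_mul_comm Gi (X * (G * Y))]
        noncomm_ring
      show (if IsNilpotent X then φ (Matrix.trace (X * (G * Y * Gi))) else 0)
          = (if IsNilpotent (Gi * X * G) then φ (Matrix.trace ((Gi * X * G) * Y)) else 0)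
      rw [htr]
      by_cases h : IsNilpotent X
      · rw [if_pos h, if_pos (hnil.mp h)]
      · rw [if_neg h, if_neg (fun hc => h (hnil.mpr hc))]
  · have step1 : (∑ X : Matrix (Fin n) (Fin n) F,
        if IsNilpotent X then φ (Matrix.trace (X * 0)) else 0)
        = ∑ X : Matrix (Fin n) (Fin n) F, if IsNilpotent X then (1 : ℂ) else 0 := by
      refine Finset.sum_congr rfl fun X _ => ?_
      rw [mul_zero, Matrix.trace_zero, AddChar.map_zero_eq_one]
    rw [step1, Finset.sum_boole]
    have : (Finset.filter (fun X : Matrix (Fin n) (Fin n) F => IsNilpotent X)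
        Finset.univ).card = Fintype.card {X : Matrix (Fin n) (Fin n) F // IsNilpotent X} :=
      (Fintype.card_subtype _).symm
    rw [this, ← Nat.card_eq_fintype_card, h3]
    push_cast
    rfl
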